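/- Let F be a sheaf of C^∞-modules of smooth vector fields on a smooth manifold M, and suppose S ⊆ F(M) is a set of global vector fields such that F(M) equals the C^∞(M)-module generated by S. Then for every x ∈ M and every open U containing x and every X ∈ F(U), there is an open neighborhood V of x with V ⊆ U such that X|_V belongs to the C^∞(V)-module generated by the restrictions of elements of S to V. -/

import Mathlib

open scoped Manifold

/-- `X` belongs, on `Ω`, to the `C^∞(Ω)`-module generated by the restrictions to `Ω` of
the elements of the set `S` of global vector fields: there are finitely many elements
`s j ∈ S` and functions `a j`, smooth on `Ω`, with `X = ∑ j, a j • s j` on `Ω`. -/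
def GenByOn {E : Type*} [NormedAddCommGroup E] [NormedSpace ℝ E]
    {H : Type*} [TopologicalSpace H] (I : ModelWithCorners ℝ E H)
    {M : Type*} [TopologicalSpace M] [ChartedSpace H M]
    (S : Set ((x : M) → TangentSpace I x))
    (Ω : Set M) (X : (x : M) → TangentSpace I x) : Prop :=
  ∃ (n : ℕ) (a : Fin n → M → ℝ) (s : Fin n → (x : M) → TangentSpace I x),
    (∀ j, ContMDiffOn I (modelWithCornersSelf ℝ ℝ) (⊤ : ℕ∞) (a j) Ω) ∧
    (∀ j, s j ∈ S) ∧
    ∀ x ∈ Ω, X x = ∑ j, a j x • s j x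

/-- Let `F` be a sheaf of `C^∞`-modules of smooth vector fields on a
smooth manifold `M` (membership `X ∈ F Ω` depends only on `X|_Ω`; `F Ω` is a module over
smooth functions, is closed under restriction to smaller open sets, and satisfies the
gluing axiom).  Suppose the set `S ⊆ F(M)` of global vector fields generates `F(M)` as a
`C^∞(M)`-module.  Then for every `x ∈ M`, every open `U ∋ x` and every `X ∈ F(U)`, there
is an open neighborhood `V` of `x` with `V ⊆ U` such that `X|_V` belongs to the
`C^∞(V)`-module generated by the restrictions of elements of `S`. -/
theorem stmt5 {E : Type*} [NormedAddCommGroup E] [NormedSpace ℝ E]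
    {H : Type*} [TopologicalSpace H] (I : ModelWithCorners ℝ E H)
    {M : Type*} [TopologicalSpace M] [ChartedSpace H M] [IsManifold I (⊤ : ℕ∞) M]
    [T2Space M] [SigmaCompactSpace M] [FiniteDimensional ℝ E]
    (F : Set M → Set ((x : M) → TangentSpace I x))
    -- membership in `F Ω` depends only on the restriction to `Ω`:
    (hloc : ∀ (Ω : Set M) (X Y : (x : M) → TangentSpace I x),
      (∀ x ∈ Ω, X x = Y x) → X ∈ F Ω → Y ∈ F Ω)
    -- `F Ω` is a module over functions smooth on `Ω`:
    (hadd : ∀ (Ω : Set M) (X Y : (x : M) → TangentSpace I x),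
      X ∈ F Ω → Y ∈ F Ω → (fun x => X x + Y x) ∈ F Ω)
    (hsmul : ∀ (Ω : Set M) (φ : M → ℝ) (X : (x : M) → TangentSpace I x),
      ContMDiffOn I (modelWithCornersSelf ℝ ℝ) (⊤ : ℕ∞) φ Ω → X ∈ F Ω →
        (fun x => φ x • X x) ∈ F Ω)
    -- restriction:
    (hres : ∀ (Ω Ω' : Set M), Ω' ⊆ Ω → ∀ X ∈ F Ω, X ∈ F Ω')
    -- sheaf gluing axiom:
    (hglue : ∀ {ι : Type} (U : ι → Set M), (∀ i, IsOpen (U i)) →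
      ∀ X : (x : M) → TangentSpace I x, (∀ i, X ∈ F (U i)) → X ∈ F (⋃ i, U i))
    (S : Set ((x : M) → TangentSpace I x))
    (hS : S ⊆ F Set.univ)
    -- `F(M)` is the `C^∞(M)`-module generated by `S`:
    (hgen : ∀ X, X ∈ F Set.univ ↔ GenByOn I S Set.univ X) :
    ∀ (x : M) (U : Set M), IsOpen U → x ∈ U → ∀ X ∈ F U,
      ∃ V : Set M, IsOpen V ∧ x ∈ V ∧ V ⊆ U ∧ GenByOn I S V X := by
  intro x U hU hxU X hX
  haveI : LocallyCompactSpace M := Manifold.locallyCompact_of_finiteDimensional I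
  -- find nested compact sets around x inside U
  obtain ⟨K, hKx, hKU, hKc⟩ := local_compact_nhds (hU.mem_nhds hxU)
  obtain ⟨K', hK'c, hKK', hK'U⟩ := exists_compact_between hKc hU hKU
  -- bump function: 1 on K, 0 outside interior K'
  obtain ⟨φ, hφ0, hφ1, -⟩ := exists_contMDiffMap_zero_one_of_isClosed I (n := ⊤)
    (isOpen_interior.isClosed_compl) hKc.isClosed
    (Set.disjoint_left.2 fun y hy hyK => hy (hKK' hyK))
  set Y : (x : M) → TangentSpace I x := fun y => φ y • X y with hY
  -- zero vector field is in F of anything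
  have hzero : ∀ Ω : Set M, (fun _ : M => (0 : TangentSpace I _)) ∈ F Ω := by
    intro Ω
    have h0 : (fun _ : M => (0 : TangentSpace I _)) ∈ F Set.univ := by
      rw [hgen]
      exact ⟨0, fun j => 0, fun j => 0, fun j => by exact contMDiffOn_const,
        fun j => j.elim0, fun y _ => by simp⟩
    exact hres _ _ (Set.subset_univ _) _ h0
  -- Y ∈ F U
  have hYU : Y ∈ F U := hsmul U φ X (φ.contMDiff.contMDiffOn) hX
  -- Y ∈ F (K'ᶜ)
  have hYK : Y ∈ F (K'ᶜ) := by
    refine hloc _ _ _ (fun y hy => ?_) (hzero (K'ᶜ))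
    have : φ y = 0 := hφ0 (fun h => hy (interior_subset h))
    simp [hY, this]
  -- glue
  have hYuniv : Y ∈ F Set.univ := by
    have hcov : (⋃ b : Bool, if b then U else K'ᶜ) = Set.univ := by
      apply Set.eq_univ_of_forall
      intro y
      by_cases hy : y ∈ K'
      · exact Set.mem_iUnion.2 ⟨true, hK'U hy⟩
      · exact Set.mem_iUnion.2 ⟨false, hy⟩
    have := hglue (fun b : Bool => if b then U else K'ᶜ)
      (fun b => by cases b <;> simp [hU, hK'c.isClosed.isOpen_compl]) Y
      (fun b => by cases b <;> simpa)
    rwa [hcov] at this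
  -- expand Y in terms of S
  obtain ⟨n, a, s, ha, hsS, hsum⟩ := (hgen Y).1 hYuniv
  refine ⟨interior K, isOpen_interior, mem_interior_iff_mem_nhds.2 hKx, fun y hy => hKU (interior_subset hy),
    n, a, s, fun j => (ha j).mono (Set.subset_univ _), hsS, fun y hy => ?_⟩
  have h1 : φ y = 1 := hφ1 (interior_subset hy)
  have := hsum y (Set.mem_univ y)
  rw [hY] at this
  simp only [h1, one_smul] at this
  exact this
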